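/- (Convergence of the EG± algorithm for general linear systems) Let A ∈ ℝ^{m×n} with A ≠ 0 and b ∈ ℝ^m be such that S = {x ∈ ℝ^n : Ax = b} is nonempty, and let f(x) = (1/2)‖Ax − b‖₂². Let u₀, v₀ ∈ ℝ^n_{++} and define recursively u_{k+1} = u_k ∘ exp(−α_k ∇f(u_k − v_k)), v_{k+1} = v_k ∘ exp(α_k ∇f(u_k − v_k)), where x_k = u_k − v_k and α_k = min{ f(x_k)/‖∇f(x_k)‖²_{u_k + v_k} , 1.79/‖∇f(x_k)‖_∞ }, assuming ∇f(x_k) ≠ 0 for all k. Then (u_k, v_k) converges to some (u*, v*) with u*, v* ∈ ℝ^n_+ and x* = u* − v* ∈ S, and for every k ∈ ℕ, min_{0≤i≤k} f(x_i) ≤ 4·R·(R + ‖u* + v*‖₁)·C_A² / (k+1), where R = D_h(u*, u₀) + D_h(v*, v₀) and C_A = max_{1≤j≤n} ‖A_{:j}‖₂ is the maximum Euclidean column norm of A. -/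

import Mathlib

open Finset Filter

/-- Bregman divergence generated by the negative entropy
`h(x) = ∑ i, x i * (log (x i) - 1)` (with the convention `0 * log 0 = 0`,
which holds automatically since `Real.log 0 = 0`). -/
noncomputable def Dh {n : ℕ} (x y : Fin n → ℝ) : ℝ :=
  ∑ i, (x i * Real.log (x i / y i) - x i + y i)

/-- ℓ₁-norm of a vector. -/
noncomputable def l1 {n : ℕ} (x : Fin n → ℝ) : ℝ := ∑ i, |x i|

/-- Objective `f(x) = (1/2) ‖Ax - b‖₂²`. -/
noncomputable def fobj {m n : ℕ} (A : Matrix (Fin m) (Fin n) ℝ) (b : Fin m → ℝ)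
    (x : Fin n → ℝ) : ℝ := (1 / 2) * ∑ j, ((A.mulVec x - b) j) ^ 2

/-- Gradient `∇f(x) = Aᵀ (Ax - b)` of `f(x) = (1/2)‖Ax - b‖₂²`. -/
noncomputable def gradf {m n : ℕ} (A : Matrix (Fin m) (Fin n) ℝ) (b : Fin m → ℝ)
    (x : Fin n → ℝ) : Fin n → ℝ := A.transpose.mulVec (A.mulVec x - b)

/-- Maximum norm `‖v‖_∞`. -/
noncomputable def linfty {n : ℕ} [NeZero n] (v : Fin n → ℝ) : ℝ :=
  Finset.univ.sup' Finset.univ_nonempty fun i => |v i|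

/-- Weighted squared norm `‖v‖²_x = ∑ i, x i * (v i)²`. -/
noncomputable def wnormSq {n : ℕ} (x v : Fin n → ℝ) : ℝ := ∑ i, x i * (v i) ^ 2

/-- The Polyak-type stepsize `min { f(x)/‖∇f(x)‖²_x , 1.79/‖∇f(x)‖_∞ }`. -/
noncomputable def polyakStep {m n : ℕ} [NeZero n] (A : Matrix (Fin m) (Fin n) ℝ)
    (b : Fin m → ℝ) (x : Fin n → ℝ) : ℝ :=
  min (fobj A b x / wnormSq x (gradf A b x)) (1.79 / linfty (gradf A b x))

/-- Maximum Euclidean column norm `C_A = max_j ‖A_{:j}‖₂`. -/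
noncomputable def colNormMax {m n : ℕ} [NeZero n] (A : Matrix (Fin m) (Fin n) ℝ) : ℝ :=
  Finset.univ.sup' Finset.univ_nonempty fun j => Real.sqrt (∑ i, (A i j) ^ 2)

/-- The EG± stepsize `min { f(u-v)/‖∇f(u-v)‖²_{u+v} , 1.79/‖∇f(u-v)‖_∞ }`. -/
noncomputable def egStep {m n : ℕ} [NeZero n] (A : Matrix (Fin m) (Fin n) ℝ)
    (b : Fin m → ℝ) (u v : Fin n → ℝ) : ℝ :=
  min (fobj A b (u - v) / wnormSq (u + v) (gradf A b (u - v)))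
      (1.79 / linfty (gradf A b (u - v)))

set_option linter.deprecated false
set_option linter.unusedSectionVars false
set_option linter.unusedVariables false

lemma exp_quad {t : ℝ} (ht : |t| ≤ 1.79) : Real.exp t ≤ 1 + t + t ^ 2 := by
  rw [abs_le] at ht
  obtain ⟨hl, hr⟩ := ht
  rcases le_or_gt t 0 with h0 | h0
  · -- t ≤ 0 : exp t ≤ 1/(1-t) ≤ 1+t+t²
    have h1 : -t + 1 ≤ Real.exp (-t) := Real.add_one_le_exp (-t)
    have h2 : Real.exp t * Real.exp (-t) = 1 := by
      rw [← Real.exp_add]; simp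
    have h3 : Real.exp t * (1 - t) ≤ 1 := by
      calc Real.exp t * (1 - t) ≤ Real.exp t * Real.exp (-t) := by
            apply mul_le_mul_of_nonneg_left (by linarith) (Real.exp_pos t).le
        _ = 1 := h2
    nlinarith [Real.exp_pos t, sq_nonneg t]
  rcases le_or_gt t 1 with h1 | h1
  · -- 0 < t ≤ 1
    have hb := Real.exp_bound (x := t) (by rw [abs_le]; constructor <;> linarith) (n := 3) (by norm_num)
    simp only [Finset.sum_range_succ, Finset.sum_range_zero] at hb
    rw [abs_of_nonneg h0.le] at hb
    rw [abs_le] at hb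
    norm_num [Nat.factorial] at hb
    nlinarith [pow_le_pow_left₀ h0.le h1 3, sq_nonneg t, hb.2, pow_nonneg h0.le 3]
  · -- 1 < t ≤ 1.79
    set r := t - 1 with hrdef
    have hr0 : 0 ≤ r := by simp [hrdef]; linarith
    have hr79 : r ≤ 0.79 := by simp [hrdef]; linarith
    have hb := Real.exp_bound (x := r) (by rw [abs_le]; constructor <;> linarith) (n := 5) (by norm_num)
    simp only [Finset.sum_range_succ, Finset.sum_range_zero] at hb
    rw [abs_of_nonneg hr0, abs_le] at hb
    norm_num [Nat.factorial] at hb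
    have hexp1 : Real.exp 1 ≤ 2.7182818286 := Real.exp_one_lt_d9.le
    have hsplit : Real.exp t = Real.exp 1 * Real.exp r := by
      rw [← Real.exp_add, hrdef]; ring_nf
    have hEr : Real.exp r ≤ 1 + r + r^2/2 + r^3/6 + r^4/24 + r^5/100 := by nlinarith [hb.2]
    have hpos : (0:ℝ) < Real.exp r := Real.exp_pos r
    have key : 2.7182818286 * (1 + r + r^2/2 + r^3/6 + r^4/24 + r^5/100) ≤ 3 + 3*r + r^2 := by
      nlinarith [pow_le_pow_left₀ hr0 hr79 2, pow_le_pow_left₀ hr0 hr79 3,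
        pow_le_pow_left₀ hr0 hr79 4, mul_nonneg hr0 hr0,
        mul_nonneg (mul_nonneg hr0 hr0) hr0,
        mul_nonneg (sub_nonneg.2 hr79) hr0]
    calc Real.exp t = Real.exp 1 * Real.exp r := hsplit
      _ ≤ 2.7182818286 * (1 + r + r^2/2 + r^3/6 + r^4/24 + r^5/100) := by
          apply mul_le_mul hexp1 hEr hpos.le (by norm_num)
      _ ≤ 3 + 3*r + r^2 := key
      _ = 1 + t + t^2 := by rw [hrdef]; ring

lemma log_le_two_sqrt {z : ℝ} (hz : 0 < z) : Real.log z ≤ 2 * (Real.sqrt z - 1) := by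
  have h1 : Real.log (Real.sqrt z) ≤ Real.sqrt z - 1 :=
    Real.log_le_sub_one_of_pos (Real.sqrt_pos.2 hz)
  have h2 : Real.log z = 2 * Real.log (Real.sqrt z) := by
    rw [Real.log_sqrt hz.le]; ring
  linarith

lemma log_le_half {z : ℝ} (hz : 0 < z) : Real.log z ≤ z / 2 := by
  have h1 := log_le_two_sqrt hz
  have h2 : Real.sqrt z ^ 2 = z := Real.sq_sqrt hz.le
  nlinarith [Real.sqrt_nonneg z, sq_nonneg (Real.sqrt z - 2)]

lemma dh_term_lower {p y : ℝ} (hp : 0 ≤ p) (hy : 0 < y) :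
    (Real.sqrt y - Real.sqrt p) ^ 2 ≤ p * Real.log (p / y) - p + y := by
  rcases hp.eq_or_lt with h | h
  · simp [← h, Real.sq_sqrt hy.le]
  · have hlog : Real.log (p / y) = - Real.log (y / p) := by
      rw [← Real.log_inv]; congr 1; field_simp
    have h1 := log_le_two_sqrt (show (0:ℝ) < y / p from div_pos hy h)
    have hsy : Real.sqrt y ^ 2 = y := Real.sq_sqrt hy.le
    have hsp : Real.sqrt p ^ 2 = p := Real.sq_sqrt hp
    have hsd : Real.sqrt (y / p) = Real.sqrt y / Real.sqrt p := Real.sqrt_div hy.le p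
    rw [hsd] at h1
    have hsppos : 0 < Real.sqrt p := Real.sqrt_pos.2 h
    have hmul : p * Real.log (y / p) ≤ p * (2 * (Real.sqrt y / Real.sqrt p - 1)) :=
      mul_le_mul_of_nonneg_left h1 hp
    have hps : p * (Real.sqrt y / Real.sqrt p) = Real.sqrt p * Real.sqrt y := by
      rw [mul_div_assoc', div_eq_iff hsppos.ne']; linear_combination (- Real.sqrt y) * hsp
    rw [hlog]
    nlinarith [hmul, hps]

lemma dh_term_nonneg {p y : ℝ} (hp : 0 ≤ p) (hy : 0 < y) :
    0 ≤ p * Real.log (p / y) - p + y :=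
  le_trans (sq_nonneg _) (dh_term_lower hp hy)

lemma y_le_dh_term {p y : ℝ} (hp : 0 ≤ p) (hy : 0 < y) :
    y ≤ 2 * (p * Real.log (p / y) - p + y) + 2 * p := by
  rcases hp.eq_or_lt with h | h
  · simp [← h]; linarith
  · have hlog : Real.log (p / y) = - Real.log (y / p) := by
      rw [← Real.log_inv]; congr 1; field_simp
    have h1 := log_le_half (show (0:ℝ) < y / p from div_pos hy h)
    have hmul : p * Real.log (y / p) ≤ p * (y / p / 2) := mul_le_mul_of_nonneg_left h1 hp
    have : p * (y / p / 2) = y / 2 := by field_simp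
    rw [hlog]; nlinarith

section lems
variable {m n : ℕ} [NeZero n] (A : Matrix (Fin m) (Fin n) ℝ) (b : Fin m → ℝ)

lemma grad_apply (x : Fin n → ℝ) (j : Fin n) :
    gradf A b x j = ∑ i, A i j * (A.mulVec x - b) i := by
  simp [gradf, Matrix.mulVec, dotProduct, Matrix.transpose]

lemma grad_dot (x y : Fin n → ℝ) :
    ∑ j, gradf A b x j * y j = ∑ i, (A.mulVec x - b) i * (A.mulVec y) i := by
  simp only [grad_apply, Finset.sum_mul]
  rw [Finset.sum_comm]
  congr 1; ext i
  simp [Matrix.mulVec, dotProduct, Finset.mul_sum]; congr 1; ext j; ring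

lemma two_fobj_eq (x : Fin n → ℝ) :
    ∑ i, ((A.mulVec x - b) i) ^ 2 = 2 * fobj A b x := by
  simp only [fobj]; ring

lemma fobj_nonneg (x : Fin n → ℝ) : 0 ≤ fobj A b x := by
  unfold fobj; positivity

lemma fobj_pos (x : Fin n → ℝ) (h : gradf A b x ≠ 0) : 0 < fobj A b x := by
  have hres : A.mulVec x - b ≠ 0 := by
    intro h0; apply h; simp [gradf, h0]
  obtain ⟨i, hi⟩ : ∃ i, (A.mulVec x - b) i ≠ 0 := by
    by_contra hc; push_neg at hc; exact hres (funext hc)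
  have h1 : 0 < ((A.mulVec x - b) i) ^ 2 := by positivity
  have h2 : ((A.mulVec x - b) i) ^ 2 ≤ ∑ j, ((A.mulVec x - b) j) ^ 2 :=
    Finset.single_le_sum (f := fun j => ((A.mulVec x - b) j) ^ 2) (fun j _ => sq_nonneg _) (Finset.mem_univ i)
  simp only [fobj]; linarith

lemma grad_abs_le (x : Fin n → ℝ) (j : Fin n) :
    |gradf A b x j| ≤ colNormMax A * Real.sqrt (2 * fobj A b x) := by
  rw [grad_apply]
  have hcs := Finset.sum_mul_sq_le_sq_mul_sq Finset.univ (fun i => A i j)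
    (fun i => (A.mulVec x - b) i)
  have h1 : |∑ i, A i j * (A.mulVec x - b) i| ≤
      Real.sqrt ((∑ i, (A i j) ^ 2) * ∑ i, ((A.mulVec x - b) i) ^ 2) := by
    rw [← Real.sqrt_sq_eq_abs]
    exact Real.sqrt_le_sqrt hcs
  refine h1.trans ?_
  rw [Real.sqrt_mul (Finset.sum_nonneg fun i _ => sq_nonneg _), two_fobj_eq]
  apply mul_le_mul_of_nonneg_right _ (Real.sqrt_nonneg _)
  exact Finset.le_sup' (fun j => Real.sqrt (∑ i, (A i j) ^ 2)) (Finset.mem_univ j)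

lemma le_linfty (v : Fin n → ℝ) (j : Fin n) : |v j| ≤ linfty v :=
  Finset.le_sup' (fun i => |v i|) (Finset.mem_univ j)

lemma linfty_le (v : Fin n → ℝ) {c : ℝ} (h : ∀ j, |v j| ≤ c) : linfty v ≤ c :=
  Finset.sup'_le _ _ fun j _ => h j

lemma linfty_pos (v : Fin n → ℝ) (h : v ≠ 0) : 0 < linfty v := by
  obtain ⟨j, hj⟩ : ∃ j, v j ≠ 0 := by
    by_contra hc; push_neg at hc; exact h (funext hc)
  exact lt_of_lt_of_le (abs_pos.2 hj) (le_linfty v j)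

lemma colNormMax_pos (hA : A ≠ 0) : 0 < colNormMax A := by
  obtain ⟨i, j, hij⟩ : ∃ i j, A i j ≠ 0 := by
    by_contra hc; push_neg at hc
    exact hA (by ext i j; simpa using hc i j)
  have h1 : 0 < ∑ i', (A i' j) ^ 2 := by
    have : (0:ℝ) < (A i j)^2 := by positivity
    have h2 : (A i j)^2 ≤ ∑ i', (A i' j) ^ 2 :=
      Finset.single_le_sum (f := fun i' => (A i' j) ^ 2) (fun i' _ => sq_nonneg _) (Finset.mem_univ i)
    linarith
  exact lt_of_lt_of_le (Real.sqrt_pos.2 h1)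
    (Finset.le_sup' (fun j => Real.sqrt (∑ i, (A i j) ^ 2)) (Finset.mem_univ j))

lemma wnormSq_pos (w g : Fin n → ℝ) (hw : ∀ i, 0 < w i) (hg : g ≠ 0) :
    0 < wnormSq w g := by
  obtain ⟨j, hj⟩ : ∃ j, g j ≠ 0 := by
    by_contra hc; push_neg at hc; exact hg (funext hc)
  have h1 : 0 < w j * g j ^ 2 := mul_pos (hw j) (by positivity)
  have h2 : w j * g j ^ 2 ≤ wnormSq w g :=
    Finset.single_le_sum (fun i _ => mul_nonneg (hw i).le (sq_nonneg _)) (Finset.mem_univ j)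
  linarith

lemma wnormSq_le (w g : Fin n → ℝ) (hw : ∀ i, 0 ≤ w i) {c : ℝ} (hc : 0 ≤ c)
    (hgc : ∀ i, |g i| ≤ c) : wnormSq w g ≤ (∑ i, w i) * c ^ 2 := by
  rw [wnormSq, Finset.sum_mul]
  apply Finset.sum_le_sum fun i _ => ?_
  apply mul_le_mul_of_nonneg_left _ (hw i)
  calc g i ^ 2 = |g i| ^ 2 := (sq_abs _).symm
    _ ≤ c ^ 2 := by apply pow_le_pow_left₀ (abs_nonneg _) (hgc i)

end lems
set_option linter.unusedSectionVars false

lemma dh_shift {n : ℕ} (p y c y' : Fin n → ℝ) (hy' : ∀ i, y' i = y i * Real.exp (c i))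
    (hp : ∀ i, 0 ≤ p i) (hy : ∀ i, 0 < y i) :
    Dh p y' = Dh p y + ∑ i, (- p i * c i + y i * (Real.exp (c i) - 1)) := by
  unfold Dh
  rw [← Finset.sum_add_distrib]
  apply Finset.sum_congr rfl
  intro i _
  rw [hy' i]
  rcases (hp i).eq_or_lt with h | h
  · simp [← h]; ring
  · have hlog : Real.log (p i / (y i * Real.exp (c i))) =
        Real.log (p i / y i) - c i := by
      rw [Real.log_div h.ne' (by have := hy i; positivity), Real.log_div h.ne' (hy i).ne',
        Real.log_mul (hy i).ne' (Real.exp_ne_zero _), Real.log_exp]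
      ring
    rw [hlog]; ring

lemma descent {m n : ℕ} [NeZero n] (A : Matrix (Fin m) (Fin n) ℝ) (b : Fin m → ℝ)
    (u v : Fin n → ℝ) (hu : ∀ i, 0 < u i) (hv : ∀ i, 0 < v i)
    (hg : gradf A b (u - v) ≠ 0)
    (p q : Fin n → ℝ) (hp : ∀ i, 0 ≤ p i) (hq : ∀ i, 0 ≤ q i)
    (hpq : A.mulVec (p - q) = b)
    (u' v' : Fin n → ℝ)
    (hu' : ∀ i, u' i = u i * Real.exp (-(egStep A b u v) * gradf A b (u - v) i))
    (hv' : ∀ i, v' i = v i * Real.exp ((egStep A b u v) * gradf A b (u - v) i)) :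
    Dh p u' + Dh q v' + egStep A b u v * fobj A b (u - v) ≤ Dh p u + Dh q v := by
  set α := egStep A b u v with hα
  set g := gradf A b (u - v) with hgdef
  set f := fobj A b (u - v) with hfdef
  set wns := wnormSq (u + v) g with hwnsdef
  set Li := linfty g with hLidef
  have hfpos : 0 < f := fobj_pos A b (u - v) hg
  have hLi : 0 < Li := linfty_pos g hg
  have hwns : 0 < wns := wnormSq_pos (u + v) g (fun i => by
    have := hu i; have := hv i; simp only [Pi.add_apply]; linarith) hg
  have hα1 : α ≤ f / wns := min_le_left _ _
  have hα2 : α ≤ 1.79 / Li := min_le_right _ _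
  have hαpos : 0 < α :=
    lt_min (div_pos hfpos hwns) (div_pos (by norm_num) hLi)
  have hαwns : α * wns ≤ f := (le_div_iff₀ hwns).1 hα1
  have habs : ∀ i, |α * g i| ≤ 1.79 := by
    intro i
    rw [abs_mul, abs_of_pos hαpos]
    calc α * |g i| ≤ (1.79 / Li) * Li :=
          mul_le_mul hα2 (le_linfty g i) (abs_nonneg _) (by positivity)
      _ = 1.79 := by field_simp
  rw [dh_shift p u _ u' hu' hp hu, dh_shift q v _ v' hv' hq hv]
  have key : ∀ i, (- p i * (-α * g i) + u i * (Real.exp (-α * g i) - 1)) +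
      (- q i * (α * g i) + v i * (Real.exp (α * g i) - 1)) ≤
      α * (g i * (p i - q i - (u i - v i))) + α ^ 2 * ((u i + v i) * g i ^ 2) := by
    intro i
    have h1 : |(-α * g i)| ≤ 1.79 := by rw [neg_mul, abs_neg]; exact habs i
    have e1 := exp_quad h1
    have e2 := exp_quad (habs i)
    have b1 : u i * (Real.exp (-α * g i) - 1) ≤ u i * (-(α * g i) + (α * g i) ^ 2) := by
      apply mul_le_mul_of_nonneg_left _ (hu i).le
      nlinarith [e1]
    have b2 : v i * (Real.exp (α * g i) - 1) ≤ v i * ((α * g i) + (α * g i) ^ 2) := by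
      apply mul_le_mul_of_nonneg_left _ (hv i).le
      nlinarith [e2]
    nlinarith [b1, b2]
  have hsum : (∑ i, (- p i * (-α * g i) + u i * (Real.exp (-α * g i) - 1))) +
      (∑ i, (- q i * (α * g i) + v i * (Real.exp (α * g i) - 1))) ≤
      α * (∑ i, g i * (p i - q i - (u i - v i))) + α ^ 2 * wns := by
    rw [← Finset.sum_add_distrib, hwnsdef, wnormSq, Finset.mul_sum, Finset.mul_sum,
      ← Finset.sum_add_distrib]
    exact Finset.sum_le_sum fun i _ => key i
  have hdot : (∑ i, g i * (p i - q i - (u i - v i))) = - (2 * f) := by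
    have h1 := grad_dot A b (u - v) (p - q - (u - v))
    have h2 : A.mulVec (p - q - (u - v)) = b - A.mulVec (u - v) := by
      rw [Matrix.mulVec_sub, hpq]
    have h3 : ∑ j, gradf A b (u - v) j * (p - q - (u - v)) j =
        ∑ i, g i * (p i - q i - (u i - v i)) := by
      apply Finset.sum_congr rfl; intro j _
      simp [hgdef, Pi.sub_apply]
    rw [h3] at h1
    rw [h1, h2]
    have : ∀ i', (A.mulVec (u - v) - b) i' * (b - A.mulVec (u - v)) i' =
        -((A.mulVec (u - v) - b) i' ^ 2) := by
      intro i'; simp [Pi.sub_apply]; ring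
    rw [Finset.sum_congr rfl (fun i' _ => this i'), ← two_fobj_eq A b (u - v)]
    simp
  have hfinal : α ^ 2 * wns ≤ α * f := by
    have : α ^ 2 * wns = α * (α * wns) := by ring
    rw [this]
    exact mul_le_mul_of_nonneg_left hαwns hαpos.le
  rw [hdot] at hsum
  nlinarith [hsum, hfinal]

lemma Dh_nonneg {n : ℕ} (p y : Fin n → ℝ) (hp : ∀ i, 0 ≤ p i) (hy : ∀ i, 0 < y i) :
    0 ≤ Dh p y :=
  Finset.sum_nonneg fun i _ => dh_term_nonneg (hp i) (hy i)

lemma sq_le_Dh {n : ℕ} (p y : Fin n → ℝ) (hp : ∀ i, 0 ≤ p i) (hy : ∀ i, 0 < y i)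
    (i : Fin n) : (Real.sqrt (y i) - Real.sqrt (p i)) ^ 2 ≤ Dh p y := by
  refine le_trans (dh_term_lower (hp i) (hy i)) ?_
  exact Finset.single_le_sum
    (f := fun i => p i * Real.log (p i / y i) - p i + y i)
    (fun i _ => dh_term_nonneg (hp i) (hy i)) (Finset.mem_univ i)

lemma sum_le_Dh {n : ℕ} (p y : Fin n → ℝ) (hp : ∀ i, 0 ≤ p i) (hy : ∀ i, 0 < y i) :
    ∑ i, y i ≤ 2 * Dh p y + 2 * ∑ i, p i := by
  unfold Dh
  rw [Finset.mul_sum, Finset.mul_sum, ← Finset.sum_add_distrib]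
  exact Finset.sum_le_sum fun i _ => y_le_dh_term (hp i) (hy i)

lemma dh_tendsto_zero {n : ℕ} (p : Fin n → ℝ) (y : ℕ → Fin n → ℝ)
    (hp : ∀ i, 0 ≤ p i)
    (hy : Filter.Tendsto y Filter.atTop (nhds p)) :
    Filter.Tendsto (fun k => Dh p (y k)) Filter.atTop (nhds 0) := by
  unfold Dh
  have h0 : (0:ℝ) = ∑ i : Fin n, (0:ℝ) := by simp
  rw [h0]
  apply tendsto_finset_sum
  intro i _
  have hyi : Filter.Tendsto (fun k => y k i) Filter.atTop (nhds (p i)) :=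
    tendsto_pi_nhds.1 hy i
  rcases (hp i).eq_or_lt with h | h
  · simp only [← h, zero_mul, zero_sub, neg_add_eq_sub, sub_zero]
    simpa [← h] using hyi
  · have hq : Filter.Tendsto (fun k => p i / y k i) Filter.atTop (nhds 1) := by
      have := Filter.Tendsto.div (tendsto_const_nhds (x := p i)) hyi h.ne'
      rw [div_self h.ne'] at this; exact this
    have hlog : Filter.Tendsto (fun k => Real.log (p i / y k i)) Filter.atTop (nhds 0) := by
      have hc : ContinuousAt Real.log 1 := Real.continuousAt_log one_ne_zero
      have := hc.tendsto.comp hq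
      rw [Real.log_one] at this; exact this
    have : Filter.Tendsto (fun k => p i * Real.log (p i / y k i) - p i + y k i)
        Filter.atTop (nhds (p i * 0 - p i + p i)) :=
      ((hlog.const_mul (p i)).sub tendsto_const_nhds).add hyi
    simpa using this

lemma fobj_continuous {m n : ℕ} (A : Matrix (Fin m) (Fin n) ℝ) (b : Fin m → ℝ) :
    Continuous (fun x : Fin n → ℝ => fobj A b x) := by
  unfold fobj
  apply continuous_const.mul
  apply continuous_finset_sum
  intro j _
  apply Continuous.pow
  simp only [Pi.sub_apply]
  apply Continuous.sub _ continuous_const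
  simp only [Matrix.mulVec, dotProduct]
  exact continuous_finset_sum _ fun l _ => continuous_const.mul (continuous_apply l)

set_option maxHeartbeats 1000000 in
/-- Convergence of the EG± algorithm for general linear systems: if `S ≠ ∅`,
`u₀, v₀ ∈ ℝⁿ₊₊`, and `u_{k+1} = u_k ∘ exp(-α_k ∇f(x_k))`,
`v_{k+1} = v_k ∘ exp(α_k ∇f(x_k))` with `x_k = u_k - v_k` and the Polyak-type
stepsize `α_k`, then `(u_k, v_k)` converges to some `(u*, v*)` with
`x* = u* - v* ∈ S` and
`min_{0 ≤ i ≤ k} f(x_i) ≤ 4 R (R + ‖u* + v*‖₁) C_A² / (k+1)`,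
where `R = D_h(u*, u₀) + D_h(v*, v₀)`. -/
theorem eg_pm_convergence {m n : ℕ} [NeZero n]
    (A : Matrix (Fin m) (Fin n) ℝ) (hA : A ≠ 0) (b : Fin m → ℝ)
    (hS : ∃ x : Fin n → ℝ, A.mulVec x = b)
    (u v : ℕ → Fin n → ℝ) (hu0 : ∀ i, 0 < u 0 i) (hv0 : ∀ i, 0 < v 0 i)
    (hgrad : ∀ k, gradf A b (u k - v k) ≠ 0)
    (hrecu : ∀ k i, u (k + 1) i =
      u k i * Real.exp (-(egStep A b (u k) (v k)) * gradf A b (u k - v k) i))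
    (hrecv : ∀ k i, v (k + 1) i =
      v k i * Real.exp ((egStep A b (u k) (v k)) * gradf A b (u k - v k) i)) :
    ∃ ustar vstar : Fin n → ℝ, (∀ i, 0 ≤ ustar i) ∧ (∀ i, 0 ≤ vstar i) ∧
      A.mulVec (ustar - vstar) = b ∧
      Filter.Tendsto u Filter.atTop (nhds ustar) ∧
      Filter.Tendsto v Filter.atTop (nhds vstar) ∧
      ∀ k : ℕ, (Finset.range (k + 1)).inf' (Finset.nonempty_range_iff.mpr (Nat.succ_ne_zero k))
          (fun i => fobj A b (u i - v i)) ≤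
        4 * (Dh ustar (u 0) + Dh vstar (v 0)) *
          ((Dh ustar (u 0) + Dh vstar (v 0)) + l1 (ustar + vstar)) *
          (colNormMax A) ^ 2 / (k + 1) := by
  classical
  set g : ℕ → Fin n → ℝ := fun k => gradf A b (u k - v k) with hgdef
  set f : ℕ → ℝ := fun k => fobj A b (u k - v k) with hfdef
  set α : ℕ → ℝ := fun k => egStep A b (u k) (v k) with hαdef
  set C : ℝ := colNormMax A with hCdef
  -- positivity of iterates
  have hpos : ∀ k, (∀ i, 0 < u k i) ∧ (∀ i, 0 < v k i) := by
    intro k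
    induction k with
    | zero => exact ⟨hu0, hv0⟩
    | succ k ih =>
      refine ⟨fun i => ?_, fun i => ?_⟩
      · rw [hrecu k i]; exact mul_pos (ih.1 i) (Real.exp_pos _)
      · rw [hrecv k i]; exact mul_pos (ih.2 i) (Real.exp_pos _)
  have hfpos : ∀ k, 0 < f k := fun k => fobj_pos A b _ (hgrad k)
  have hCpos : 0 < C := colNormMax_pos A hA
  have hwpos : ∀ k i, 0 < (u k + v k) i := fun k i => by
    have := (hpos k).1 i; have := (hpos k).2 i
    simp only [Pi.add_apply]; linarith
  have hwnspos : ∀ k, 0 < wnormSq (u k + v k) (g k) :=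
    fun k => wnormSq_pos _ _ (hwpos k) (hgrad k)
  have hLipos : ∀ k, 0 < linfty (g k) := fun k => linfty_pos _ (hgrad k)
  have hαmin : ∀ k, α k = min (f k / wnormSq (u k + v k) (g k)) (1.79 / linfty (g k)) :=
    fun k => rfl
  have hαpos : ∀ k, 0 < α k := by
    intro k
    rw [hαmin k]
    exact lt_min (div_pos (hfpos k) (hwnspos k)) (div_pos (by norm_num) (hLipos k))
  -- generic descent
  have hdesc : ∀ p q : Fin n → ℝ, (∀ i, 0 ≤ p i) → (∀ i, 0 ≤ q i) →
      A.mulVec (p - q) = b → ∀ k,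
      Dh p (u (k+1)) + Dh q (v (k+1)) + α k * f k ≤ Dh p (u k) + Dh q (v k) :=
    fun p q hp hq hpq k =>
      descent A b (u k) (v k) (hpos k).1 (hpos k).2 (hgrad k) p q hp hq hpq
        (u (k+1)) (v (k+1)) (hrecu k) (hrecv k)
  have htel : ∀ p q : Fin n → ℝ, (∀ i, 0 ≤ p i) → (∀ i, 0 ≤ q i) →
      A.mulVec (p - q) = b → ∀ N,
      (∑ i ∈ Finset.range N, α i * f i) + (Dh p (u N) + Dh q (v N)) ≤
        Dh p (u 0) + Dh q (v 0) := by
    intro p q hp hq hpq N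
    induction N with
    | zero => simp
    | succ N ih =>
      rw [Finset.sum_range_succ]
      have := hdesc p q hp hq hpq N
      linarith
  have hsumle : ∀ p q : Fin n → ℝ, (∀ i, 0 ≤ p i) → (∀ i, 0 ≤ q i) →
      A.mulVec (p - q) = b → ∀ N,
      (∑ i ∈ Finset.range N, α i * f i) ≤ Dh p (u 0) + Dh q (v 0) := by
    intro p q hp hq hpq N
    have h1 := htel p q hp hq hpq N
    have h2 := Dh_nonneg p (u N) hp (hpos N).1
    have h3 := Dh_nonneg q (v N) hq (hpos N).2
    linarith
  have hmono : ∀ p q : Fin n → ℝ, (∀ i, 0 ≤ p i) → (∀ i, 0 ≤ q i) →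
      A.mulVec (p - q) = b → ∀ N,
      Dh p (u N) + Dh q (v N) ≤ Dh p (u 0) + Dh q (v 0) := by
    intro p q hp hq hpq N
    have h1 := htel p q hp hq hpq N
    have h2 : 0 ≤ ∑ i ∈ Finset.range N, α i * f i :=
      Finset.sum_nonneg fun i _ => (mul_pos (hαpos i) (hfpos i)).le
    linarith
  have hRpos : ∀ p q : Fin n → ℝ, (∀ i, 0 ≤ p i) → (∀ i, 0 ≤ q i) →
      A.mulVec (p - q) = b → 0 < Dh p (u 0) + Dh q (v 0) := by
    intro p q hp hq hpq
    have h1 := hsumle p q hp hq hpq 1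
    rw [Finset.sum_range_one] at h1
    have := mul_pos (hαpos 0) (hfpos 0)
    linarith
  -- the key step-size lower bound
  have hstep : ∀ p q : Fin n → ℝ, (∀ i, 0 ≤ p i) → (∀ i, 0 ≤ q i) →
      A.mulVec (p - q) = b → ∀ k,
      min (f k / (4 * ((Dh p (u 0) + Dh q (v 0)) + ∑ i, (p i + q i)) * C ^ 2))
        (1.79 * Real.sqrt (f k / 2) / C) ≤ α k * f k := by
    intro p q hp hq hpq k
    set R := Dh p (u 0) + Dh q (v 0) with hR
    set L := ∑ i, (p i + q i) with hL
    have hRp : 0 < R := hRpos p q hp hq hpq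
    have hLnn : 0 ≤ L := Finset.sum_nonneg fun i _ => by
      have := hp i; have := hq i; linarith
    have hsumw : ∑ i, (u k i + v k i) ≤ 2 * R + 2 * L := by
      have h1 := sum_le_Dh p (u k) hp (hpos k).1
      have h2 := sum_le_Dh q (v k) hq (hpos k).2
      have h3 := hmono p q hp hq hpq k
      have h4 : ∑ i, (u k i + v k i) = (∑ i, u k i) + ∑ i, v k i :=
        Finset.sum_add_distrib
      have h5 : L = (∑ i, p i) + ∑ i, q i := Finset.sum_add_distrib
      linarith
    have hgb : ∀ i, |g k i| ≤ C * Real.sqrt (2 * f k) := fun i => grad_abs_le A b _ i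
    have hsq : Real.sqrt (2 * f k) ^ 2 = 2 * f k := Real.sq_sqrt (by nlinarith [hfpos k])
    have hwnsle : wnormSq (u k + v k) (g k) ≤ 4 * (R + L) * C ^ 2 * f k := by
      have h1 := wnormSq_le (u k + v k) (g k) (fun i => (hwpos k i).le)
        (c := C * Real.sqrt (2 * f k)) (mul_nonneg hCpos.le (Real.sqrt_nonneg _)) hgb
      have h2 : (∑ i, (u k + v k) i) = ∑ i, (u k i + v k i) := by
        apply Finset.sum_congr rfl; intro i _; simp
      have h3 : (C * Real.sqrt (2 * f k)) ^ 2 = C ^ 2 * (2 * f k) := by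
        rw [mul_pow, hsq]
      have h4 : (0:ℝ) ≤ (C * Real.sqrt (2 * f k)) ^ 2 := sq_nonneg _
      calc wnormSq (u k + v k) (g k) ≤ (∑ i, (u k + v k) i) * (C * Real.sqrt (2 * f k)) ^ 2 := h1
        _ ≤ (2 * R + 2 * L) * (C * Real.sqrt (2 * f k)) ^ 2 := by
            apply mul_le_mul_of_nonneg_right _ h4
            rw [h2]; exact hsumw
        _ = 4 * (R + L) * C ^ 2 * f k := by rw [h3]; ring
    have hLile : linfty (g k) ≤ C * Real.sqrt (2 * f k) := linfty_le _ hgb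
    rw [hαmin k]
    rcases min_cases (f k / wnormSq (u k + v k) (g k)) (1.79 / linfty (g k)) with
      ⟨heq, _⟩ | ⟨heq, _⟩ <;> rw [heq]
    · -- branch 1
      refine le_trans (min_le_left _ _) ?_
      have hd : f k / (4 * (R + L) * C ^ 2) ≤ f k / wnormSq (u k + v k) (g k) * f k := by
        have hc4 : 0 < 4 * (R + L) * C ^ 2 := by positivity
        have h6 : f k / wnormSq (u k + v k) (g k) * f k = f k ^ 2 / wnormSq (u k + v k) (g k) := by
          rw [pow_two]; ring
        rw [h6]
        have h7 : f k ^ 2 / (4 * (R + L) * C ^ 2 * f k) ≤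
            f k ^ 2 / wnormSq (u k + v k) (g k) :=
          div_le_div_of_nonneg_left (sq_nonneg _) (hwnspos k) hwnsle
        have h8 : f k ^ 2 / (4 * (R + L) * C ^ 2 * f k) = f k / (4 * (R + L) * C ^ 2) := by
          rw [pow_two, mul_comm (4 * (R + L) * C ^ 2) (f k),
            mul_div_mul_left _ _ (hfpos k).ne']
        linarith
      exact hd
    · -- branch 2
      refine le_trans (min_le_right _ _) ?_
      have hsqp : 0 < Real.sqrt (2 * f k) := Real.sqrt_pos.2 (by nlinarith [hfpos k])
      have h9 : 1.79 * f k / (C * Real.sqrt (2 * f k)) ≤ 1.79 / linfty (g k) * f k := by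
        have h10 : 1.79 / linfty (g k) * f k = 1.79 * f k / linfty (g k) := by ring
        rw [h10]
        apply div_le_div_of_nonneg_left (by nlinarith [hfpos k]) (hLipos k) hLile
      have h11 : 1.79 * Real.sqrt (f k / 2) / C = 1.79 * f k / (C * Real.sqrt (2 * f k)) := by
        have hprod : Real.sqrt (2 * f k) * Real.sqrt (f k / 2) = f k := by
          rw [← Real.sqrt_mul (by nlinarith [hfpos k])]
          have h12 : 2 * f k * (f k / 2) = f k ^ 2 := by ring
          rw [h12, Real.sqrt_sq (hfpos k).le]
        rw [div_eq_div_iff hCpos.ne' (mul_pos hCpos hsqp).ne']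
        calc 1.79 * Real.sqrt (f k / 2) * (C * Real.sqrt (2 * f k))
            = 1.79 * (Real.sqrt (2 * f k) * Real.sqrt (f k / 2)) * C := by ring
          _ = 1.79 * f k * C := by rw [hprod]
      rw [h11]
      exact h9
  -- base solution pair
  obtain ⟨xh, hxh⟩ := hS
  set p0 : Fin n → ℝ := fun i => max (xh i) 0 with hp0def
  set q0 : Fin n → ℝ := fun i => max (-xh i) 0 with hq0def
  have hp0 : ∀ i, 0 ≤ p0 i := fun i => le_max_right _ _
  have hq0 : ∀ i, 0 ≤ q0 i := fun i => le_max_right _ _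
  have hpq0 : A.mulVec (p0 - q0) = b := by
    have hd : p0 - q0 = xh := by
      funext i
      simp only [Pi.sub_apply, hp0def, hq0def]
      rcases le_total (xh i) 0 with h | h
      · rw [max_eq_right h, max_eq_left (by linarith)]; ring
      · rw [max_eq_left h, max_eq_right (by linarith)]; ring
    rw [hd, hxh]
  -- summability and f → 0
  have hsnn : ∀ k, 0 ≤ α k * f k := fun k => (mul_pos (hαpos k) (hfpos k)).le
  have hsummable : Summable (fun k => α k * f k) :=
    summable_of_sum_range_le hsnn (fun N => hsumle p0 q0 hp0 hq0 hpq0 N)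
  have hs0 : Filter.Tendsto (fun k => α k * f k) Filter.atTop (nhds 0) :=
    hsummable.tendsto_atTop_zero
  set R0 : ℝ := Dh p0 (u 0) + Dh q0 (v 0) with hR0def
  set L0 : ℝ := ∑ i, (p0 i + q0 i) with hL0def
  have hR0 : 0 < R0 := hRpos p0 q0 hp0 hq0 hpq0
  have hL0 : 0 ≤ L0 := Finset.sum_nonneg fun i _ => by
    have := hp0 i; have := hq0 i; linarith
  have hc4 : 0 < 4 * (R0 + L0) * C ^ 2 := by
    have := pow_pos hCpos 2; nlinarith
  have hfle : ∀ k, f k ≤ max ((4 * (R0 + L0) * C ^ 2) * (α k * f k))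
      (2 * (C * (α k * f k) / 1.79) ^ 2) := by
    intro k
    have h1 := hstep p0 q0 hp0 hq0 hpq0 k
    rcases min_cases (f k / (4 * ((Dh p0 (u 0) + Dh q0 (v 0)) + ∑ i, (p0 i + q0 i)) * C ^ 2))
      (1.79 * Real.sqrt (f k / 2) / C) with ⟨heq, _⟩ | ⟨heq, _⟩ <;> rw [heq] at h1
    · refine le_trans ?_ (le_max_left _ _)
      rw [div_le_iff₀ hc4] at h1
      nlinarith [h1]
    · refine le_trans ?_ (le_max_right _ _)
      rw [div_le_iff₀ hCpos] at h1
      have h2 : Real.sqrt (f k / 2) ≤ C * (α k * f k) / 1.79 := by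
        rw [le_div_iff₀ (by norm_num : (0:ℝ) < 1.79)]
        nlinarith [h1]
      have h3 : f k / 2 ≤ (C * (α k * f k) / 1.79) ^ 2 := by
        have h4 : Real.sqrt (f k / 2) ^ 2 ≤ (C * (α k * f k) / 1.79) ^ 2 :=
          pow_le_pow_left₀ (Real.sqrt_nonneg _) h2 2
        rwa [Real.sq_sqrt (by nlinarith [hfpos k] : (0:ℝ) ≤ f k / 2)] at h4
      linarith
  have hT0 : Filter.Tendsto (fun k => max ((4 * (R0 + L0) * C ^ 2) * (α k * f k))
      (2 * (C * (α k * f k) / 1.79) ^ 2)) Filter.atTop (nhds 0) := by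
    have t1 : Filter.Tendsto (fun k => (4 * (R0 + L0) * C ^ 2) * (α k * f k))
        Filter.atTop (nhds 0) := by
      have := hs0.const_mul (4 * (R0 + L0) * C ^ 2); simpa using this
    have t2 : Filter.Tendsto (fun k => 2 * (C * (α k * f k) / 1.79) ^ 2)
        Filter.atTop (nhds 0) := by
      have := (((hs0.const_mul C).div_const 1.79).pow 2).const_mul 2
      simpa using this
    have := t1.max t2
    simpa using this
  have hf0 : Filter.Tendsto f Filter.atTop (nhds 0) := by
    refine tendsto_of_tendsto_of_tendsto_of_le_of_le tendsto_const_nhds hT0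
      (fun k => (hfpos k).le) hfle
  -- boundedness
  set Mb : ℝ := 2 * R0 + 2 * L0 with hMbdef
  have hsumw0 : ∀ k, ∑ i, (u k i + v k i) ≤ Mb := by
    intro k
    have h1 := sum_le_Dh p0 (u k) hp0 (hpos k).1
    have h2 := sum_le_Dh q0 (v k) hq0 (hpos k).2
    have h3 := hmono p0 q0 hp0 hq0 hpq0 k
    have h4 : ∑ i, (u k i + v k i) = (∑ i, u k i) + ∑ i, v k i :=
      Finset.sum_add_distrib
    have h5 : L0 = (∑ i, p0 i) + ∑ i, q0 i := Finset.sum_add_distrib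
    rw [hMbdef]
    linarith
  have hbox : ∀ k i, u k i ≤ Mb ∧ v k i ≤ Mb := by
    intro k i
    have h1 : u k i + v k i ≤ ∑ i', (u k i' + v k i') :=
      Finset.single_le_sum (f := fun i' => u k i' + v k i')
        (fun i' _ => by
          have := (hpos k).1 i'; have := (hpos k).2 i'; linarith)
        (Finset.mem_univ i)
    have h2 := hsumw0 k
    have h3 := (hpos k).1 i
    have h4 := (hpos k).2 i
    exact ⟨by linarith, by linarith⟩
  -- compactness
  set z : ℕ → (Fin n → ℝ) × (Fin n → ℝ) := fun k => (u k, v k) with hzdef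
  have hzmem : ∀ k, z k ∈ Set.Icc ((0 : Fin n → ℝ), (0 : Fin n → ℝ))
      (((fun _ => Mb) : Fin n → ℝ), ((fun _ => Mb) : Fin n → ℝ)) := by
    intro k
    constructor
    · exact ⟨fun i => ((hpos k).1 i).le, fun i => ((hpos k).2 i).le⟩
    · exact ⟨fun i => (hbox k i).1, fun i => (hbox k i).2⟩
  obtain ⟨zb, hzb, φ, hφ, hzconv⟩ := (isCompact_Icc).tendsto_subseq hzmem
  obtain ⟨ub, vb⟩ := zb
  have hcu : Filter.Tendsto (fun j => u (φ j)) Filter.atTop (nhds ub) :=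
    (continuous_fst.tendsto (ub, vb)).comp hzconv
  have hcv : Filter.Tendsto (fun j => v (φ j)) Filter.atTop (nhds vb) :=
    (continuous_snd.tendsto (ub, vb)).comp hzconv
  have hubnn : ∀ i, 0 ≤ ub i := fun i => hzb.1.1 i
  have hvbnn : ∀ i, 0 ≤ vb i := fun i => hzb.1.2 i
  -- the limit point solves the system
  have hsolb : A.mulVec (ub - vb) = b := by
    have hxc : Filter.Tendsto (fun j => u (φ j) - v (φ j)) Filter.atTop (nhds (ub - vb)) :=
      hcu.sub hcv
    have h1 : Filter.Tendsto (fun j => f (φ j)) Filter.atTop (nhds (fobj A b (ub - vb))) :=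
      ((fobj_continuous A b).tendsto _).comp hxc
    have h2 : Filter.Tendsto (fun j => f (φ j)) Filter.atTop (nhds 0) :=
      hf0.comp hφ.tendsto_atTop
    have h3 : fobj A b (ub - vb) = 0 := tendsto_nhds_unique h1 h2
    have h4 : ∑ j, ((A.mulVec (ub - vb) - b) j) ^ 2 = 0 := by
      rw [two_fobj_eq A b (ub - vb), h3]; ring
    have h5 : ∀ j, (A.mulVec (ub - vb) - b) j = 0 := by
      intro j
      have h6 := (Finset.sum_eq_zero_iff_of_nonneg
        (fun j _ => sq_nonneg ((A.mulVec (ub - vb) - b) j))).1 h4 j (Finset.mem_univ j)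
      exact (pow_eq_zero_iff (by norm_num : (2:ℕ) ≠ 0)).1 h6
    have h7 : A.mulVec (ub - vb) - b = 0 := funext h5
    rw [sub_eq_zero] at h7
    exact h7
  -- Bregman distance to the limit tends to 0
  set Db : ℕ → ℝ := fun k => Dh ub (u k) + Dh vb (v k) with hDbdef
  have hDanti : Antitone Db := antitone_nat_of_succ_le fun k => by
    have := hdesc ub vb hubnn hvbnn hsolb k
    have := mul_pos (hαpos k) (hfpos k)
    simp only [hDbdef]
    linarith
  have hDnn : ∀ k, 0 ≤ Db k := fun k =>
    add_nonneg (Dh_nonneg ub (u k) hubnn (hpos k).1) (Dh_nonneg vb (v k) hvbnn (hpos k).2)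
  have hDbdd : BddBelow (Set.range Db) := by
    refine ⟨0, ?_⟩
    rintro x ⟨k, rfl⟩
    exact hDnn k
  have hDinf : Filter.Tendsto Db Filter.atTop (nhds (⨅ k, Db k)) :=
    tendsto_atTop_ciInf hDanti hDbdd
  have hDsub0 : Filter.Tendsto (fun j => Db (φ j)) Filter.atTop (nhds 0) := by
    have hu0' : Filter.Tendsto (fun j => Dh ub (u (φ j))) Filter.atTop (nhds 0) :=
      dh_tendsto_zero ub (fun j => u (φ j)) hubnn hcu
    have hv0' : Filter.Tendsto (fun j => Dh vb (v (φ j))) Filter.atTop (nhds 0) :=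
      dh_tendsto_zero vb (fun j => v (φ j)) hvbnn hcv
    have := hu0'.add hv0'
    simpa using this
  have hDsubinf : Filter.Tendsto (fun j => Db (φ j)) Filter.atTop (nhds (⨅ k, Db k)) :=
    hDinf.comp hφ.tendsto_atTop
  have hinf0 : (⨅ k, Db k) = 0 := tendsto_nhds_unique hDsubinf hDsub0
  have hD0 : Filter.Tendsto Db Filter.atTop (nhds 0) := hinf0 ▸ hDinf
  -- full convergence of the iterates
  have hsqrtD : Filter.Tendsto (fun k => Real.sqrt (Db k)) Filter.atTop (nhds 0) := by
    have := (Real.continuous_sqrt.tendsto 0).comp hD0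
    rw [Real.sqrt_zero] at this; exact this
  have hcoord : ∀ (w : ℕ → Fin n → ℝ) (wb : Fin n → ℝ),
      (∀ k i, 0 < w k i) → (∀ i, 0 ≤ wb i) →
      (∀ k i, (Real.sqrt (w k i) - Real.sqrt (wb i)) ^ 2 ≤ Db k) →
      Filter.Tendsto w Filter.atTop (nhds wb) := by
    intro w wb hw hwb hsq
    rw [tendsto_pi_nhds]
    intro i
    have hdiff : Filter.Tendsto (fun k => Real.sqrt (w k i) - Real.sqrt (wb i))
        Filter.atTop (nhds 0) := by
      apply squeeze_zero_norm _ hsqrtD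
      intro k
      rw [Real.norm_eq_abs, ← Real.sqrt_sq_eq_abs]
      exact Real.sqrt_le_sqrt (hsq k i)
    have hsq2 : Filter.Tendsto (fun k => Real.sqrt (w k i)) Filter.atTop
        (nhds (Real.sqrt (wb i))) := by
      have := hdiff.add (tendsto_const_nhds (x := Real.sqrt (wb i)))
      simpa using this
    have hmul : Filter.Tendsto (fun k => Real.sqrt (w k i) * Real.sqrt (w k i))
        Filter.atTop (nhds (Real.sqrt (wb i) * Real.sqrt (wb i))) := hsq2.mul hsq2
    have heq1 : (fun k => Real.sqrt (w k i) * Real.sqrt (w k i)) = fun k => w k i :=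
      funext fun k => Real.mul_self_sqrt (hw k i).le
    rw [heq1, Real.mul_self_sqrt (hwb i)] at hmul
    exact hmul
  have hconvu : Filter.Tendsto u Filter.atTop (nhds ub) := by
    apply hcoord u ub (fun k => (hpos k).1) hubnn
    intro k i
    have h1 := sq_le_Dh ub (u k) hubnn (hpos k).1 i
    have h2 := Dh_nonneg vb (v k) hvbnn (hpos k).2
    simp only [hDbdef]
    linarith
  have hconvv : Filter.Tendsto v Filter.atTop (nhds vb) := by
    apply hcoord v vb (fun k => (hpos k).2) hvbnn
    intro k i
    have h1 := sq_le_Dh vb (v k) hvbnn (hpos k).2 i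
    have h2 := Dh_nonneg ub (u k) hubnn (hpos k).1
    simp only [hDbdef]
    linarith
  -- conclusion
  clear_value g f α C
  refine ⟨ub, vb, hubnn, hvbnn, hsolb, hconvu, hconvv, ?_⟩
  intro k
  by_contra hcon
  push_neg at hcon
  set R : ℝ := Dh ub (u 0) + Dh vb (v 0) with hRdef
  set L : ℝ := l1 (ub + vb) with hLdef
  clear_value R L
  have hLeq : (∑ i, (ub i + vb i)) = L := by
    rw [hLdef]
    unfold l1
    apply Finset.sum_congr rfl
    intro i _
    rw [Pi.add_apply, abs_of_nonneg (by have := hubnn i; have := hvbnn i; linarith)]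
  have hRp : 0 < R := by rw [hRdef]; exact hRpos ub vb hubnn hvbnn hsolb
  have hLnn : 0 ≤ L := by
    rw [← hLeq]
    exact Finset.sum_nonneg fun i _ => by have := hubnn i; have := hvbnn i; linarith
  have hK : (0:ℝ) < (k:ℝ) + 1 := by positivity
  have hK1 : (1:ℝ) ≤ (k:ℝ) + 1 := by
    have : (0:ℝ) ≤ (k:ℝ) := Nat.cast_nonneg k
    linarith
  have hfB : ∀ i ∈ Finset.range (k+1), 4 * R * (R + L) * C ^ 2 / ((k:ℝ) + 1) < f i := by
    intro i hi
    exact lt_of_lt_of_le hcon (Finset.inf'_le _ hi)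
  have hlow : ∀ i ∈ Finset.range (k+1), R / ((k:ℝ) + 1) < α i * f i := by
    intro i hi
    have h1 := hstep ub vb hubnn hvbnn hsolb i
    rw [hLeq, ← hRdef] at h1
    refine lt_of_lt_of_le ?_ h1
    have h2 : 4 * R * (R + L) * C ^ 2 < f i * ((k:ℝ) + 1) := by
      have := hfB i hi
      rwa [div_lt_iff₀ hK] at this
    rw [lt_min_iff]
    constructor
    · rw [div_lt_div_iff₀ hK (by nlinarith [pow_pos hCpos 2, hRp, hLnn])]
      linarith [h2, (show R * (4 * (R + L) * C ^ 2) = 4 * R * (R + L) * C ^ 2 from by ring)]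
    · rw [div_lt_div_iff₀ hK hCpos]
      set s : ℝ := Real.sqrt (f i / 2) with hsdef
      have hs2 : s ^ 2 = f i / 2 := Real.sq_sqrt (by nlinarith [hfpos i])
      have hspos : 0 < s := Real.sqrt_pos.2 (by nlinarith [hfpos i])
      have h5 : f i * ((k:ℝ) + 1) ≤ f i * ((k:ℝ) + 1) * ((k:ℝ) + 1) := by
        nlinarith [mul_pos (hfpos i) hK]
      have h6 : 4 * (R * R) * C ^ 2 ≤ 4 * R * (R + L) * C ^ 2 := by
        nlinarith [mul_nonneg (mul_nonneg hRp.le hLnn) (sq_nonneg C)]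
      have hsq : (R * C) ^ 2 < (1.79 * s * ((k:ℝ) + 1)) ^ 2 := by
        have e2 : (1.79 * s * ((k:ℝ) + 1)) ^ 2 =
            1.79 ^ 2 * s ^ 2 * ((k:ℝ) + 1) ^ 2 := by ring
        rw [e2, hs2]
        have h9 : 0 < f i * ((k:ℝ) + 1) * ((k:ℝ) + 1) :=
          mul_pos (mul_pos (hfpos i) hK) hK
        linarith [h2, h5, h6, h9]
      have hrhs : 0 ≤ 1.79 * s * ((k:ℝ) + 1) := by positivity
      exact lt_of_pow_lt_pow_left₀ 2 hrhs hsq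
  have hsum2 := hsumle ub vb hubnn hvbnn hsolb (k+1)
  have hconst : ∑ _i ∈ Finset.range (k+1), R / ((k:ℝ) + 1) = R := by
    rw [Finset.sum_const, Finset.card_range, nsmul_eq_mul]
    push_cast
    field_simp
  have hsumgt : ∑ _i ∈ Finset.range (k+1), R / ((k:ℝ) + 1) <
      ∑ i ∈ Finset.range (k+1), α i * f i :=
    Finset.sum_lt_sum_of_nonempty Finset.nonempty_range_add_one hlow
  rw [hconst] at hsumgt
  linarith
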